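/- Let K be a field, let G ∈ K[[z]][t] be a polynomial in t with power series coefficients, and let f, f₁, f₂ ∈ K[[z]] and an integer s ≥ 2 be such that f'² = G(z, f), f ≡ f₁ mod z^s, z^s divides f₂, and f ≡ f₁ + f₂ mod z^{2s−1}. Then f₂ satisfies the linearized equation 2·f₁'·f₂' − G_t(z, f₁)·f₂ ≡ G(z, f₁) − f₁'² mod z^{2s−2}, where G_t denotes the derivative of G with respect to t. -/

import Mathlib

open PowerSeries

section Aux
variable {R : Type*} [CommRing R]

lemma aux_coeff_eq_iff (f g : PowerSeries R) (n : ℕ) :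
    (X : PowerSeries R) ^ n ∣ f - g ↔ ∀ j < n, coeff (R := R) j f = coeff (R := R) j g := by
  rw [X_pow_dvd_iff]
  simp [sub_eq_zero]

lemma aux_dvd_derivative (f : PowerSeries R) (n : ℕ)
    (h : (X : PowerSeries R) ^ (n + 1) ∣ f) : (X : PowerSeries R) ^ n ∣ d⁄dX R f := by
  rw [X_pow_dvd_iff] at h ⊢
  intro m hm
  rw [coeff_derivative, h (m + 1) (by omega), zero_mul]

lemma aux_pow_taylor (a b : R) : ∀ n : ℕ,
    (a - b) ^ 2 ∣ a ^ n - b ^ n - n * b ^ (n - 1) * (a - b)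
  | 0 => by simp
  | 1 => by
      have : a ^ 1 - b ^ 1 - (1 : ℕ) * b ^ (1 - 1) * (a - b) = 0 := by push_cast; ring
      rw [this]
      exact dvd_zero _
  | (n + 2) => by
      have ih := aux_pow_taylor a b (n + 1)
      have key : a ^ (n + 2) - b ^ (n + 2) - ((n + 2 : ℕ) : R) * b ^ (n + 2 - 1) * (a - b)
          = a * (a ^ (n + 1) - b ^ (n + 1) - ((n + 1 : ℕ) : R) * b ^ (n + 1 - 1) * (a - b))
            + ((n + 1 : ℕ) : R) * b ^ n * (a - b) ^ 2 := by
        simp only [Nat.add_sub_cancel]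
        push_cast
        ring
      rw [key]
      exact dvd_add (ih.mul_left a) (Dvd.intro_left _ rfl)

lemma aux_eval_taylor (G : Polynomial R) (a b : R) :
    (a - b) ^ 2 ∣ G.eval a - G.eval b - (Polynomial.derivative G).eval b * (a - b) := by
  induction G using Polynomial.induction_on' with
  | add p q hp hq =>
      have := dvd_add hp hq
      simp only [Polynomial.eval_add, Polynomial.derivative_add] at this ⊢
      convert this using 1; ring
  | monomial n c =>
      simp only [Polynomial.eval_monomial, Polynomial.derivative_monomial, Polynomial.eval_monomial]
      have := (aux_pow_taylor a b n).mul_left c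
      convert this using 1
      ring

end Aux

/-- The linearization step of Brent and Kung's Newton iteration for the differential
equation `f'² = G(z, f)`: if `f'² = G(z,f)`, `f ≡ f₁ mod z^s`, `z^s ∣ f₂` and
`f ≡ f₁ + f₂ mod z^(2s-1)`, then
`2·f₁'·f₂' − G_t(z,f₁)·f₂ ≡ G(z,f₁) − f₁'² mod z^(2s-2)`. -/
theorem newton_linearized_equation {K : Type*} [Field K]
    (G : Polynomial (PowerSeries K)) (f f₁ f₂ : PowerSeries K) (s : ℕ) (hs : 2 ≤ s)
    (hode : (d⁄dX K f) ^ 2 = Polynomial.eval f G)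
    (h1 : ∀ j < s, coeff (R := K) j f = coeff (R := K) j f₁)
    (h2 : (X : PowerSeries K) ^ s ∣ f₂)
    (h3 : ∀ j < 2 * s - 1, coeff (R := K) j f = coeff (R := K) j (f₁ + f₂)) :
    ∀ j < 2 * s - 2,
      coeff (R := K) j (2 * d⁄dX K f₁ * d⁄dX K f₂ - Polynomial.eval f₁ (Polynomial.derivative G) * f₂)
        = coeff (R := K) j (Polynomial.eval f₁ G - (d⁄dX K f₁) ^ 2) := by
  rw [← aux_coeff_eq_iff] at h1 h3 ⊢
  -- abbreviations
  set f' := d⁄dX K f with hf'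
  set f₁' := d⁄dX K f₁ with hf₁'
  set f₂' := d⁄dX K f₂ with hf₂'
  -- divisibility facts
  have e1 : 2 * s - 1 - 1 + 1 = 2 * s - 1 := by omega
  have hd3 : (X : PowerSeries K) ^ (2 * s - 2) ∣ f' - f₁' - f₂' := by
    have := aux_dvd_derivative (f - (f₁ + f₂)) (2 * s - 2) (by rw [show 2*s-2+1 = 2*s-1 by omega]; exact h3)
    simpa [map_sub, sub_sub] using this
  have hd2' : (X : PowerSeries K) ^ (s - 1) ∣ f₂' := by
    have := aux_dvd_derivative f₂ (s - 1) (by rw [show s-1+1 = s by omega]; exact h2)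
    exact this
  have hsq : (X : PowerSeries K) ^ (2 * s - 2) ∣ f₂' ^ 2 := by
    have := mul_dvd_mul hd2' hd2'
    rw [← pow_add, ← pow_two] at this
    rwa [show s - 1 + (s - 1) = 2 * s - 2 by omega] at this
  have hT : (X : PowerSeries K) ^ (2 * s - 2) ∣
      Polynomial.eval f G - Polynomial.eval f₁ G
        - Polynomial.eval f₁ (Polynomial.derivative G) * (f - f₁) := by
    refine dvd_trans ?_ (aux_eval_taylor G f f₁)
    have : (X : PowerSeries K) ^ s ∣ f - f₁ := h1
    refine dvd_trans (pow_dvd_pow (X : PowerSeries K) (show 2*s-2 ≤ 2*s by omega)) ?_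
    rw [show 2*s = s + s by omega, pow_add, pow_two]
    exact mul_dvd_mul this this
  have hC : (X : PowerSeries K) ^ (2 * s - 2) ∣
      Polynomial.eval f₁ (Polynomial.derivative G) * (f - f₁ - f₂) := by
    exact Dvd.dvd.mul_left (dvd_trans (pow_dvd_pow (X : PowerSeries K) (show 2*s-2 ≤ 2*s-1 by omega))
      (by simpa [sub_sub] using h3)) _
  have hsqd : (X : PowerSeries K) ^ (2 * s - 2) ∣
      (f' - f₁' - f₂') * (f' + f₁' + f₂') := hd3.mul_right _
  -- assemble
  have key : 2 * f₁' * f₂' - Polynomial.eval f₁ (Polynomial.derivative G) * f₂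
      - (Polynomial.eval f₁ G - f₁' ^ 2)
      = (Polynomial.eval f G - Polynomial.eval f₁ G
          - Polynomial.eval f₁ (Polynomial.derivative G) * (f - f₁))
        + Polynomial.eval f₁ (Polynomial.derivative G) * (f - f₁ - f₂)
        - (f' - f₁' - f₂') * (f' + f₁' + f₂') - f₂' ^ 2 := by
    rw [← hode]
    ring
  rw [key]
  exact dvd_sub (dvd_sub (dvd_add hT hC) hsqd) hsq
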